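/- For every natural number b with 2b \le n, the \mathbb{Q}-subspace \{v \in V : F v = 0 \text{ and } H v = (2b - n) \cdot v\} of V has dimension \binom{n}{b} - \binom{n}{b-1} (with the convention \binom{n}{-1} = 0). -/

import Mathlib

set_option synthInstance.maxHeartbeats 1000000
set_option maxHeartbeats 1000000


open scoped TensorProduct

/-- The `n`-fold tensor power `V = (ℚ²)^{⊗ n}` over `ℚ`. -/
abbrev Vtens (n : ℕ) := ⨂[ℚ] _ : Fin n, (Fin 2 → ℚ)

/-- `e : ℚ² → ℚ²` with `e(e₋) = e₊`, `e(e₊) = 0`, where `e₋ = (1,0)`, `e₊ = (0,1)`. -/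
noncomputable def eMapQ : (Fin 2 → ℚ) →ₗ[ℚ] (Fin 2 → ℚ) := Matrix.toLin' !![0, 0; 1, 0]

/-- `f : ℚ² → ℚ²` with `f(e₊) = e₋`, `f(e₋) = 0`. -/
noncomputable def fMapQ : (Fin 2 → ℚ) →ₗ[ℚ] (Fin 2 → ℚ) := Matrix.toLin' !![0, 1; 0, 0]

/-- `h : ℚ² → ℚ²` with `h(e₊) = e₊`, `h(e₋) = -e₋`. -/
noncomputable def hMapQ : (Fin 2 → ℚ) →ₗ[ℚ] (Fin 2 → ℚ) := Matrix.toLin' !![-1, 0; 0, 1]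

/-- `F = ∑ᵢ id ⊗ ⋯ ⊗ f ⊗ ⋯ ⊗ id` acting on `(ℚ²)^{⊗ n}`. -/
noncomputable def FopQ (n : ℕ) : Module.End ℚ (Vtens n) :=
  ∑ i : Fin n, PiTensorProduct.map (Function.update (fun _ => LinearMap.id) i fMapQ)

/-- `H = ∑ᵢ id ⊗ ⋯ ⊗ h ⊗ ⋯ ⊗ id` acting on `(ℚ²)^{⊗ n}`. -/
noncomputable def HopQ (n : ℕ) : Module.End ℚ (Vtens n) :=
  ∑ i : Fin n, PiTensorProduct.map (Function.update (fun _ => LinearMap.id) i hMapQ)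

namespace SL2Dim

open Function Finset Module

lemma fin2_cases (x : Fin 2) : x = 0 ∨ x = 1 := by omega

/-- The model space: functions on `Fin n → Fin 2`. -/
abbrev MS (n : ℕ) := (Fin n → Fin 2) → ℚ

/-- Number of `1`s. -/
def wt {n : ℕ} (s : Fin n → Fin 2) : ℕ := (Finset.univ.filter fun i => s i = 1).card

variable {n : ℕ}

lemma wt_update_one {s : Fin n → Fin 2} {i : Fin n} (h : s i = 0) :
    wt (update s i 1) = wt s + 1 := by
  have hset : (Finset.univ.filter fun j => update s i 1 j = 1)
      = insert i (Finset.univ.filter fun j => s j = 1) := by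
    ext j
    by_cases hj : j = i
    · subst hj; simp [Function.update_self]
    · simp [Function.update_of_ne hj, hj]
  have hni : i ∉ (Finset.univ.filter fun j => s j = 1) := by simp [h]
  simp [wt, hset, Finset.card_insert_of_notMem hni]

lemma wt_update_zero {s : Fin n → Fin 2} {i : Fin n} (h : s i = 1) :
    wt (update s i 0) + 1 = wt s := by
  have hset : (Finset.univ.filter fun j => s j = 1)
      = insert i (Finset.univ.filter fun j => update s i 0 j = 1) := by
    ext j
    by_cases hj : j = i
    · subst hj; simp [Function.update_self, h]
    · simp [Function.update_of_ne hj, hj]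
  have hni : i ∉ (Finset.univ.filter fun j => update s i 0 j = 1) := by
    simp [Function.update_self]
  rw [wt, wt, hset, Finset.card_insert_of_notMem hni]

/-- Single-site lowering operator. -/
def Fi (n : ℕ) (i : Fin n) : MS n →ₗ[ℚ] MS n where
  toFun g := fun s => if s i = 0 then g (update s i 1) else 0
  map_add' g h := by funext s; by_cases hs : s i = 0 <;> simp [hs]
  map_smul' c g := by funext s; by_cases hs : s i = 0 <;> simp [hs]

/-- Single-site raising operator. -/
def Ei (n : ℕ) (i : Fin n) : MS n →ₗ[ℚ] MS n where
  toFun g := fun s => if s i = 1 then g (update s i 0) else 0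
  map_add' g h := by funext s; by_cases hs : s i = 1 <;> simp [hs]
  map_smul' c g := by funext s; by_cases hs : s i = 1 <;> simp [hs]

/-- Single-site Cartan operator. -/
def Hi (n : ℕ) (i : Fin n) : MS n →ₗ[ℚ] MS n where
  toFun g := fun s => (if s i = 1 then (1 : ℚ) else -1) * g s
  map_add' g h := by funext s; by_cases hs : s i = 1 <;> simp [hs] <;> ring
  map_smul' c g := by funext s; by_cases hs : s i = 1 <;> simp [hs] <;> ring

def Fm (n : ℕ) : Module.End ℚ (MS n) := ∑ i, Fi n i
def Em (n : ℕ) : Module.End ℚ (MS n) := ∑ i, Ei n i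
def Hm (n : ℕ) : Module.End ℚ (MS n) := ∑ i, Hi n i

lemma Fm_apply (g : MS n) (s : Fin n → Fin 2) :
    Fm n g s = ∑ i, if s i = 0 then g (update s i 1) else 0 := by
  simp [Fm, Fi, LinearMap.sum_apply, Finset.sum_apply]

lemma Em_apply (g : MS n) (s : Fin n → Fin 2) :
    Em n g s = ∑ i, if s i = 1 then g (update s i 0) else 0 := by
  simp [Em, Ei, LinearMap.sum_apply, Finset.sum_apply]

lemma sum_ite_one (s : Fin n → Fin 2) :
    (∑ i, if s i = 1 then (1 : ℚ) else 0) = wt s := by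
  rw [Finset.sum_boole]
  simp [wt]

lemma Hm_apply (g : MS n) (s : Fin n → Fin 2) :
    Hm n g s = ((2 * wt s : ℚ) - n) * g s := by
  have h1 : Hm n g s = (∑ i, if s i = 1 then (1 : ℚ) else -1) * g s := by
    simp [Hm, Hi, LinearMap.sum_apply, Finset.sum_apply, Finset.sum_mul]
  have h2 : (∑ i, if s i = 1 then (1 : ℚ) else -1) = (2 * wt s : ℚ) - n := by
    have key : ∀ i : Fin n, (if s i = 1 then (1 : ℚ) else -1)
        = 2 * (if s i = 1 then (1:ℚ) else 0) - 1 := by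
      intro i; split <;> norm_num
    rw [Finset.sum_congr rfl fun i _ => key i, Finset.sum_sub_distrib, ← Finset.mul_sum,
      sum_ite_one]
    simp [Finset.card_univ]
  rw [h1, h2]

/-! ### Inner product -/

/-- Standard inner product on the model space. -/
def ip (g h : MS n) : ℚ := ∑ s, g s * h s

lemma ip_self_nonneg (g : MS n) : 0 ≤ ip g g :=
  Finset.sum_nonneg fun s _ => mul_self_nonneg _

lemma eq_zero_of_ip_self_eq_zero {g : MS n} (h : ip g g = 0) : g = 0 := by
  funext s
  have := (Finset.sum_eq_zero_iff_of_nonneg fun t (_ : t ∈ Finset.univ) =>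
    mul_self_nonneg (g t)).mp h s (Finset.mem_univ s)
  exact mul_self_eq_zero.mp this

/-- The coordinate-flip equivalence. -/
def flipE (n : ℕ) (i : Fin n) : (Fin n → Fin 2) ≃ (Fin n → Fin 2) where
  toFun s := update s i (1 - s i)
  invFun s := update s i (1 - s i)
  left_inv s := by
    funext j
    by_cases hj : j = i
    · subst hj
      simp only [Function.update_self]
      revert s; intro s; rcases fin2_cases (s j) with h | h <;> simp [h]
    · simp [Function.update_of_ne hj]
  right_inv s := by
    funext j
    by_cases hj : j = i
    · subst hj
      simp only [Function.update_self]
      rcases fin2_cases (s j) with h | h <;> simp [h]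
    · simp [Function.update_of_ne hj]

lemma ip_Ei_right (i : Fin n) (g h : MS n) : ip g (Ei n i h) = ip (Fi n i g) h := by
  unfold ip
  refine Fintype.sum_equiv (flipE n i) _ _ fun s => ?_
  simp only [Ei, Fi, LinearMap.coe_mk, AddHom.coe_mk, flipE, Equiv.coe_fn_mk]
  rcases fin2_cases (s i) with hs | hs
  · -- s i = 0 : LHS has `Ei` factor 0; RHS : flip has i-th coord 1
    have h1 : update s i (1 - s i) i = 1 := by simp [hs]
    have h2 : update (update s i (1 - s i)) i 0 = s := by
      rw [Function.update_idem, ← hs, Function.update_eq_self]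
    have h3 : update s i (1 - s i) = update s i 1 := by rw [hs]; norm_num
    simp [hs, h1, h2, h3]
  · have h4 : update s i (1 - s i) = update s i 0 := by
      rw [hs]; congr 1
    have h5 : update s i 1 = s := by
      conv_lhs => rw [← hs]
      exact Function.update_eq_self _ _
    rw [h4]
    simp only [Function.update_self, Function.update_idem, h5, if_pos rfl, hs]
    simp [mul_comm]

lemma ip_Em_right (g h : MS n) : ip g (Em n h) = ip (Fm n g) h := by
  have h1 : ip g (Em n h) = ∑ i, ip g (Ei n i h) := by
    unfold ip Em
    simp only [LinearMap.sum_apply, Finset.sum_apply, Finset.mul_sum]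
    exact Finset.sum_comm
  have h2 : ip (Fm n g) h = ∑ i, ip (Fi n i g) h := by
    unfold ip Fm
    simp only [LinearMap.sum_apply, Finset.sum_apply, Finset.sum_mul]
    exact Finset.sum_comm
  rw [h1, h2]
  exact Finset.sum_congr rfl fun i _ => ip_Ei_right i g h

/-! ### The commutator identity -/

lemma ite_sum {c : Prop} [Decidable c] {α : Type*} (t : Finset α) (f : α → ℚ) :
    (if c then ∑ x ∈ t, f x else 0) = ∑ x ∈ t, if c then f x else 0 := by
  split <;> simp

lemma comm_apply (g : MS n) (s : Fin n → Fin 2) :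
    Fm n (Em n g) s - Em n (Fm n g) s = ((n : ℚ) - 2 * wt s) * g s := by
  classical
  set A : Fin n → Fin n → ℚ := fun i j =>
    if s i = 0 then (if update s i 1 j = 1 then g (update (update s i 1) j 0) else 0) else 0
    with hA
  set B : Fin n → Fin n → ℚ := fun j i =>
    if s j = 1 then (if update s j 0 i = 0 then g (update (update s j 0) i 1) else 0) else 0
    with hB
  have hFE : Fm n (Em n g) s = ∑ i, ∑ j, A i j := by
    rw [Fm_apply]
    refine Finset.sum_congr rfl fun i _ => ?_
    rw [Em_apply, ite_sum]
  have hEF : Em n (Fm n g) s = ∑ j, ∑ i, B j i := by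
    rw [Em_apply]
    refine Finset.sum_congr rfl fun j _ => ?_
    rw [Fm_apply, ite_sum]
  have hEF' : Em n (Fm n g) s = ∑ i, ∑ j, B j i := hEF.trans Finset.sum_comm
  rw [hFE, hEF', ← Finset.sum_sub_distrib]
  have hrow : ∀ i : Fin n, (∑ j, A i j) - (∑ j, B j i) = A i i - B i i := by
    intro i
    rw [← Finset.sum_sub_distrib]
    refine Finset.sum_eq_single i (fun j _ hj => ?_) (by simp)
    -- j ≠ i : A i j = B j i
    have hAij : A i j = if s i = 0 then (if s j = 1 then
        g (update (update s i 1) j 0) else 0) else 0 := by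
      rw [hA]; simp only [Function.update_of_ne hj]
    have hBji : B j i = if s j = 1 then (if s i = 0 then
        g (update (update s j 0) i 1) else 0) else 0 := by
      rw [hB]; simp only [Function.update_of_ne (Ne.symm hj)]
    have hupd : update (update s i 1) j 0 = update (update s j 0) i 1 :=
      Function.update_comm (Ne.symm hj) _ _ _
    rw [hAij, hBji, hupd]
    by_cases h1 : s i = 0 <;> by_cases h2 : s j = 1 <;> simp [h1, h2]
  rw [Finset.sum_congr rfl fun i _ => hrow i]
  have hdiag : ∀ i : Fin n, A i i - B i i
      = ((1 : ℚ) - 2 * (if s i = 1 then (1:ℚ) else 0)) * g s := by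
    intro i
    rcases fin2_cases (s i) with h | h
    · have h1 : update s i 1 i = 1 := Function.update_self _ _ _
      have h2 : update (update s i 1) i 0 = s := by
        rw [Function.update_idem, ← h, Function.update_eq_self]
      have hne : ¬ s i = 1 := by rw [h]; norm_num
      rw [hA, hB]
      simp only [if_pos h, if_pos h1, h2, if_neg hne]
      norm_num
    · have hne : ¬ s i = 0 := by rw [h]; norm_num
      have h1 : update s i 0 i = 0 := Function.update_self _ _ _
      have h2 : update (update s i 0) i 1 = s := by
        rw [Function.update_idem, ← h, Function.update_eq_self]
      rw [hA, hB]
      simp only [if_neg hne, if_pos h, if_pos h1, h2]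
      norm_num
  rw [Finset.sum_congr rfl fun i _ => hdiag i, ← Finset.sum_mul]
  congr 1
  rw [Finset.sum_sub_distrib, ← Finset.mul_sum, sum_ite_one]
  simp [Finset.card_univ]

/-! ### Weight subspaces -/

/-- The weight-`b` subspace: functions supported on `{s : wt s = b}`. -/
def W (n b : ℕ) : Submodule ℚ (MS n) where
  carrier := {g | ∀ s, wt s ≠ b → g s = 0}
  add_mem' := fun {g h} hg hh s hs => by
    simp only [Pi.add_apply, hg s hs, hh s hs, add_zero]
  zero_mem' := fun s _ => rfl
  smul_mem' := fun c g hg s hs => by simp only [Pi.smul_apply, hg s hs, smul_zero]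

lemma mem_W {g : MS n} {b : ℕ} : g ∈ W n b ↔ ∀ s, wt s ≠ b → g s = 0 := Iff.rfl

lemma Fm_mem_W {b : ℕ} (hb : 1 ≤ b) {g : MS n} (hg : g ∈ W n b) : Fm n g ∈ W n (b - 1) := by
  intro s hs
  rw [Fm_apply]
  refine Finset.sum_eq_zero fun i _ => ?_
  split
  · next h =>
      refine hg _ ?_
      rw [wt_update_one h]
      omega
  · rfl

lemma Em_mem_W {b : ℕ} (hb : 1 ≤ b) {g : MS n} (hg : g ∈ W n (b - 1)) : Em n g ∈ W n b := by
  intro s hs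
  rw [Em_apply]
  refine Finset.sum_eq_zero fun i _ => ?_
  split
  · next h =>
      refine hg _ ?_
      have := wt_update_zero h
      omega
  · rfl

lemma W_zero_le_ker : W n 0 ≤ LinearMap.ker (Fm n) := by
  intro g hg
  rw [LinearMap.mem_ker]
  funext s
  rw [Fm_apply]
  refine Finset.sum_eq_zero fun i _ => ?_
  split
  · next h =>
      refine hg _ ?_
      rw [wt_update_one h]
      omega
  · rfl

/-! ### Dimension of weight subspaces -/

noncomputable def WEquiv (n b : ℕ) : W n b ≃ₗ[ℚ] ({s : Fin n → Fin 2 // wt s = b} → ℚ) where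
  toFun g := fun t => g.1 t.1
  map_add' g h := rfl
  map_smul' c g := rfl
  invFun h := ⟨fun s => if hs : wt s = b then h ⟨s, hs⟩ else 0,
    fun s hs => by simp [dif_neg hs]⟩
  left_inv g := by
    apply Subtype.ext
    funext s
    by_cases hs : wt s = b
    · simp [dif_pos hs]
    · simp [dif_neg hs, g.2 s hs]
  right_inv h := by
    funext t
    simp [dif_pos t.2]

def wtFinsetEquiv (n b : ℕ) :
    {s : Fin n → Fin 2 // wt s = b} ≃ {A : Finset (Fin n) // A.card = b} where
  toFun s := ⟨Finset.univ.filter fun i => s.1 i = 1, s.2⟩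
  invFun A := ⟨fun i => if i ∈ A.1 then 1 else 0, by
    rw [wt]
    rw [show (Finset.univ.filter fun i => (if i ∈ A.1 then (1 : Fin 2) else 0) = 1) = A.1 by
      ext i
      by_cases hi : i ∈ A.1 <;> simp [hi]]
    exact A.2⟩
  left_inv s := by
    apply Subtype.ext
    funext i
    rcases fin2_cases (s.1 i) with h | h <;> simp [h]
  right_inv A := by
    apply Subtype.ext
    ext i
    by_cases hi : i ∈ A.1 <;> simp [hi]

lemma card_wt_eq (n b : ℕ) :
    Fintype.card {s : Fin n → Fin 2 // wt s = b} = n.choose b := by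
  rw [Fintype.card_congr (wtFinsetEquiv n b), Fintype.card_finset_len, Fintype.card_fin]

lemma finrank_W (n b : ℕ) : finrank ℚ (W n b) = n.choose b := by
  rw [LinearEquiv.finrank_eq (WEquiv n b), finrank_fintype_fun_eq_card, card_wt_eq]

/-! ### Key injectivity -/

lemma FE_inj {b : ℕ} (hb1 : 1 ≤ b) (hbn : 2 * b ≤ n) {v : MS n}
    (hv : v ∈ W n (b - 1)) (h0 : Fm n (Em n v) = 0) : v = 0 := by
  have hcomm : ip v (Fm n (Em n v)) - ip v (Em n (Fm n v))
      = ((n : ℚ) - 2 * (b - 1 : ℕ)) * ip v v := by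
    unfold ip
    rw [← Finset.sum_sub_distrib, Finset.mul_sum]
    refine Finset.sum_congr rfl fun s _ => ?_
    have h1 : v s * Fm n (Em n v) s - v s * Em n (Fm n v) s
        = v s * (((n : ℚ) - 2 * wt s) * v s) := by
      rw [← mul_sub, comm_apply]
    rw [h1]
    by_cases hs : wt s = b - 1
    · rw [hs]; ring
    · rw [hv s hs]; ring
  rw [h0, ip_Em_right] at hcomm
  have hip0 : ip v (0 : MS n) = 0 := by simp [ip]
  rw [hip0, zero_sub] at hcomm
  have hpos : (0 : ℚ) < (n : ℚ) - 2 * (b - 1 : ℕ) := by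
    have : (b : ℚ) - 1 = ((b - 1 : ℕ) : ℚ) := by
      push_cast [hb1]; ring
    rw [← this]
    have h2 : (2 * b : ℚ) ≤ n := by exact_mod_cast hbn
    linarith
  have hFv := ip_self_nonneg (Fm n v)
  have hvv := ip_self_nonneg v
  have : ip v v = 0 := by nlinarith
  exact eq_zero_of_ip_self_eq_zero this

/-! ### Rank computation on the model side -/

noncomputable def Rop (n b : ℕ) (hb1 : 1 ≤ b) : W n (b - 1) →ₗ[ℚ] W n (b - 1) :=
  ((Fm n) ∘ₗ (Em n)).restrict (fun x hx => Fm_mem_W hb1 (Em_mem_W hb1 hx))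

lemma Rop_surjective {b : ℕ} (hb1 : 1 ≤ b) (hbn : 2 * b ≤ n) :
    Function.Surjective (Rop n b hb1) := by
  rw [← LinearMap.injective_iff_surjective]
  intro x y hxy
  have h0 : Fm n (Em n (x.1 - y.1)) = 0 := by
    have := congrArg Subtype.val hxy
    simp only [Rop, LinearMap.restrict_apply, LinearMap.comp_apply] at this
    simp only [map_sub]
    rw [this, sub_self]
  have := FE_inj hb1 hbn (sub_mem x.2 y.2) h0
  exact Subtype.ext (sub_eq_zero.mp this)

lemma range_domRestrict_eq {b : ℕ} (hb1 : 1 ≤ b) (hbn : 2 * b ≤ n) :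
    LinearMap.range ((Fm n).domRestrict (W n b)) = W n (b - 1) := by
  apply le_antisymm
  · rintro - ⟨x, rfl⟩
    exact Fm_mem_W hb1 x.2
  · intro w hw
    obtain ⟨u, hu⟩ := Rop_surjective hb1 hbn ⟨w, hw⟩
    refine ⟨⟨Em n u.1, Em_mem_W hb1 u.2⟩, ?_⟩
    have := congrArg Subtype.val hu
    simpa [Rop, LinearMap.restrict_apply] using this

lemma model_count {b : ℕ} (hb1 : 1 ≤ b) (hbn : 2 * b ≤ n) :
    n.choose (b - 1) + finrank ℚ ↥(LinearMap.ker (Fm n) ⊓ W n b) = n.choose b := by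
  have hrn := LinearMap.finrank_range_add_finrank_ker ((Fm n).domRestrict (W n b))
  rw [range_domRestrict_eq hb1 hbn] at hrn
  rw [LinearMap.ker_domRestrict] at hrn
  have hker : Submodule.comap (W n b).subtype (LinearMap.ker (Fm n))
      = Submodule.comap (W n b).subtype (LinearMap.ker (Fm n) ⊓ W n b) := by
    ext x
    simp only [Submodule.mem_comap, Submodule.mem_inf, Submodule.coe_subtype]
    exact ⟨fun h => ⟨h, x.2⟩, fun h => h.1⟩
  have h2 : finrank ℚ ↥(Submodule.comap (W n b).subtype (LinearMap.ker (Fm n) ⊓ W n b))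
      = finrank ℚ ↥(LinearMap.ker (Fm n) ⊓ W n b) :=
    LinearEquiv.finrank_eq (Submodule.comapSubtypeEquivOfLe inf_le_right)
  rw [hker, h2, finrank_W n (b-1), finrank_W n b] at hrn
  exact hrn

/-! ### The tensor model -/

lemma fMapQ_single0 : fMapQ (Pi.single (0 : Fin 2) (1:ℚ)) = 0 := by
  funext j
  fin_cases j <;>
    simp [fMapQ, Matrix.toLin'_apply, Matrix.mulVec, dotProduct, Fin.sum_univ_two,
      Pi.single_apply]

lemma fMapQ_single1 : fMapQ (Pi.single (1 : Fin 2) (1:ℚ)) = Pi.single (0 : Fin 2) (1:ℚ) := by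
  funext j
  fin_cases j <;>
    simp [fMapQ, Matrix.toLin'_apply, Matrix.mulVec, dotProduct, Fin.sum_univ_two,
      Pi.single_apply]

lemma hMapQ_single0 : hMapQ (Pi.single (0 : Fin 2) (1:ℚ)) = -Pi.single (0 : Fin 2) (1:ℚ) := by
  funext j
  fin_cases j <;>
    simp [hMapQ, Matrix.toLin'_apply, Matrix.mulVec, dotProduct, Fin.sum_univ_two,
      Pi.single_apply]

lemma hMapQ_single1 : hMapQ (Pi.single (1 : Fin 2) (1:ℚ)) = Pi.single (1 : Fin 2) (1:ℚ) := by
  funext j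
  fin_cases j <;>
    simp [hMapQ, Matrix.toLin'_apply, Matrix.mulVec, dotProduct, Fin.sum_univ_two,
      Pi.single_apply]

/-- The standard basis vector of the tensor power. -/
noncomputable def bV {n : ℕ} (s : Fin n → Fin 2) : Vtens n :=
  PiTensorProduct.tprod ℚ fun i => Pi.single (s i) 1

/-- Coordinates map from the model space to the tensor power. -/
noncomputable def toV (n : ℕ) : MS n →ₗ[ℚ] Vtens n where
  toFun g := ∑ s, g s • bV s
  map_add' g h := by simp [add_smul, Finset.sum_add_distrib]
  map_smul' c g := by simp [smul_smul, Finset.smul_sum]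

lemma toV_apply (g : MS n) : toV n g = ∑ s, g s • bV s := rfl

lemma toV_single (t : Fin n → Fin 2) : toV n (Pi.single t 1) = bV t := by
  rw [toV_apply]
  rw [Finset.sum_eq_single t (fun s _ hs => by simp [Pi.single_apply, hs]) (by simp)]
  simp

/-- The coefficients multilinear map. -/
noncomputable def coeffML (n : ℕ) :
    MultilinearMap ℚ (fun _ : Fin n => (Fin 2 → ℚ)) (MS n) :=
  MultilinearMap.pi fun s => (MultilinearMap.mkPiAlgebra ℚ (Fin n) ℚ).compLinearMap
    fun i => LinearMap.proj (s i)

noncomputable def coeffV (n : ℕ) : Vtens n →ₗ[ℚ] MS n := PiTensorProduct.lift (coeffML n)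

lemma coeffV_tprod (v : Fin n → (Fin 2 → ℚ)) :
    coeffV n (PiTensorProduct.tprod ℚ v) = fun s => ∏ i, v i (s i) := by
  funext s
  simp [coeffV, coeffML, PiTensorProduct.lift.tprod, MultilinearMap.compLinearMap_apply,
    MultilinearMap.mkPiAlgebra_apply]

lemma coeffV_bV (s : Fin n → Fin 2) : coeffV n (bV s) = Pi.single s 1 := by
  rw [bV, coeffV_tprod]
  funext t
  rw [Pi.single_apply]
  rcases eq_or_ne t s with rfl | hts
  · simp
  · rw [if_neg hts]
    obtain ⟨i, hi⟩ := Function.ne_iff.mp hts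
    refine Finset.prod_eq_zero (Finset.mem_univ i) ?_
    rw [Pi.single_apply, if_neg hi]

/-- Multilinear expansion of a pure tensor in the standard basis. -/
lemma tprod_expand (v : Fin n → (Fin 2 → ℚ)) :
    PiTensorProduct.tprod ℚ v = ∑ s, (∏ i, v i (s i)) • bV s := by
  have hv : v = fun i => ∑ x : Fin 2, v i x • (Pi.single x 1 : Fin 2 → ℚ) := by
    funext i
    have hsingle : ∀ x : Fin 2, v i x • (Pi.single x 1 : Fin 2 → ℚ) = Pi.single x (v i x) :=
      fun x => by
      rw [← Pi.single_smul, smul_eq_mul, mul_one]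
    rw [Finset.sum_congr rfl fun x _ => hsingle x, Finset.univ_sum_single]
  conv_lhs => rw [hv]
  rw [MultilinearMap.map_sum]
  refine Finset.sum_congr rfl fun s _ => ?_
  rw [MultilinearMap.map_smul_univ]
  rfl

lemma toV_coeffV : (toV n).comp (coeffV n) = LinearMap.id := by
  apply PiTensorProduct.ext
  apply MultilinearMap.ext
  intro v
  simp only [LinearMap.compMultilinearMap_apply, LinearMap.comp_apply, LinearMap.id_apply]
  rw [coeffV_tprod, tprod_expand, toV_apply]

lemma coeffV_toV : (coeffV n).comp (toV n) = LinearMap.id := by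
  apply LinearMap.ext
  intro g
  simp only [LinearMap.comp_apply, LinearMap.id_apply, toV_apply, map_sum, map_smul]
  rw [Finset.sum_congr rfl fun s _ => by rw [coeffV_bV s]]
  funext t
  simp only [Finset.sum_apply, Pi.smul_apply, Pi.single_apply, smul_eq_mul]
  rw [Finset.sum_eq_single t (fun s _ hs => by rw [if_neg (Ne.symm hs), mul_zero]) (by simp)]
  simp

/-- The linear equivalence between the model space and the tensor power. -/
noncomputable def phi (n : ℕ) : MS n ≃ₗ[ℚ] Vtens n :=
  LinearEquiv.ofLinear (toV n) (coeffV n) toV_coeffV coeffV_toV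

lemma phi_apply (g : MS n) : phi n g = toV n g := rfl

/-! ### Intertwining -/

lemma Fi_apply (i : Fin n) (g : MS n) (s : Fin n → Fin 2) :
    Fi n i g s = if s i = 0 then g (update s i 1) else 0 := rfl

lemma Hi_apply (i : Fin n) (g : MS n) (s : Fin n → Fin 2) :
    Hi n i g s = (if s i = 1 then (1 : ℚ) else -1) * g s := rfl

lemma Fi_single (i : Fin n) (t : Fin n → Fin 2) :
    Fi n i (Pi.single t 1) =
      if t i = 1 then Pi.single (update t i 0) (1:ℚ) else 0 := by
  funext s
  rcases fin2_cases (t i) with ht | ht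
  · have hne : ¬ t i = 1 := by rw [ht]; norm_num
    rw [if_neg hne, Fi_apply]
    show _ = (0 : MS n) s
    split
    · have hne2 : ¬ (update s i 1 = t) := fun hcontra => by
        have h2 := congrFun hcontra i
        rw [Function.update_self, ht] at h2
        exact absurd h2 (by norm_num)
      rw [Pi.single_apply, if_neg hne2]
      rfl
    · rfl
  · rw [if_pos ht, Fi_apply]
    by_cases hs : s i = 0
    · have key : (update s i 1 = t) ↔ (s = update t i 0) := by
        constructor
        · rintro rfl
          funext j
          by_cases hj : j = i
          · subst hj; rw [Function.update_idem, Function.update_self, hs]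
          · rw [Function.update_of_ne hj, Function.update_of_ne hj]
        · rintro rfl
          funext j
          by_cases hj : j = i
          · subst hj; rw [Function.update_idem, Function.update_self, ht]
          · rw [Function.update_of_ne hj, Function.update_of_ne hj]
      rw [if_pos hs]
      simp only [Pi.single_apply]
      rw [if_congr key rfl rfl]
    · have hne3 : ¬ (s = update t i 0) := fun hcontra => by
        apply hs
        rw [hcontra, Function.update_self]
      rw [if_neg hs, Pi.single_apply, if_neg hne3]

lemma Hi_single (i : Fin n) (t : Fin n → Fin 2) :
    Hi n i (Pi.single t 1) = (if t i = 1 then (1:ℚ) else -1) • (Pi.single t 1 : MS n) := by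
  funext s
  rw [Hi_apply]
  by_cases hst : s = t
  · subst hst
    simp [Pi.smul_apply, smul_eq_mul]
  · rw [Pi.smul_apply, Pi.single_apply, if_neg hst, smul_eq_mul, mul_zero, mul_zero]

lemma mapF_bV (i : Fin n) (s : Fin n → Fin 2) :
    PiTensorProduct.map (update (fun _ => LinearMap.id) i fMapQ) (bV s)
      = if s i = 1 then bV (update s i 0) else 0 := by
  rw [bV, PiTensorProduct.map_tprod]
  have harg : (fun j => (update (fun _ => LinearMap.id) i fMapQ j) (Pi.single (s j) 1))
      = update (fun j => (Pi.single (s j) 1 : Fin 2 → ℚ)) i (fMapQ (Pi.single (s i) 1)) := by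
    funext j
    by_cases hj : j = i
    · subst hj; rw [Function.update_self, Function.update_self]
    · rw [Function.update_of_ne hj, Function.update_of_ne hj]; rfl
  rw [harg]
  rcases fin2_cases (s i) with h | h
  · have hne : ¬ s i = 1 := by rw [h]; norm_num
    rw [if_neg hne, h, fMapQ_single0]
    exact MultilinearMap.map_update_zero _ _ _
  · rw [if_pos h, h, fMapQ_single1]
    have harg2 : update (fun j => (Pi.single (s j) 1 : Fin 2 → ℚ)) i (Pi.single 0 1)
        = fun j => (Pi.single (update s i 0 j) 1 : Fin 2 → ℚ) := by
      funext j
      by_cases hj : j = i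
      · subst hj; rw [Function.update_self, Function.update_self]
      · rw [Function.update_of_ne hj, Function.update_of_ne hj]
    rw [harg2]
    rfl

lemma mapH_bV (i : Fin n) (s : Fin n → Fin 2) :
    PiTensorProduct.map (update (fun _ => LinearMap.id) i hMapQ) (bV s)
      = (if s i = 1 then (1:ℚ) else -1) • bV s := by
  rw [bV, PiTensorProduct.map_tprod]
  have harg : (fun j => (update (fun _ => LinearMap.id) i hMapQ j) (Pi.single (s j) 1))
      = update (fun j => (Pi.single (s j) 1 : Fin 2 → ℚ)) i (hMapQ (Pi.single (s i) 1)) := by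
    funext j
    by_cases hj : j = i
    · subst hj; rw [Function.update_self, Function.update_self]
    · rw [Function.update_of_ne hj, Function.update_of_ne hj]; rfl
  rw [harg]
  rcases fin2_cases (s i) with h | h
  · have hne : ¬ s i = 1 := by rw [h]; norm_num
    rw [if_neg hne, h, hMapQ_single0]
    rw [show -(Pi.single 0 1 : Fin 2 → ℚ) = (-1 : ℚ) • (Pi.single 0 1 : Fin 2 → ℚ) by
      rw [neg_one_smul]]
    rw [MultilinearMap.map_update_smul]
    congr 1
    rw [show (Pi.single 0 1 : Fin 2 → ℚ) = Pi.single (s i) 1 by rw [h]]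
    rw [Function.update_eq_self]
  · rw [if_pos h, h, hMapQ_single1, one_smul]
    rw [show (Pi.single 1 1 : Fin 2 → ℚ) = Pi.single (s i) 1 by rw [h]]
    rw [Function.update_eq_self]

lemma toV_Fm : (toV n) ∘ₗ (Fm n) = (FopQ n) ∘ₗ (toV n) := by
  refine Basis.ext (Pi.basisFun ℚ (Fin n → Fin 2)) fun t => ?_
  rw [Pi.basisFun_apply]
  simp only [LinearMap.comp_apply]
  rw [toV_single, Fm, FopQ, LinearMap.sum_apply, map_sum, LinearMap.sum_apply]
  refine Finset.sum_congr rfl fun i _ => ?_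
  rw [Fi_single, mapF_bV]
  split
  · rw [toV_single]
  · exact map_zero _

lemma toV_Hm : (toV n) ∘ₗ (Hm n) = (HopQ n) ∘ₗ (toV n) := by
  refine Basis.ext (Pi.basisFun ℚ (Fin n → Fin 2)) fun t => ?_
  rw [Pi.basisFun_apply]
  simp only [LinearMap.comp_apply]
  rw [toV_single, Hm, HopQ, LinearMap.sum_apply, map_sum, LinearMap.sum_apply]
  refine Finset.sum_congr rfl fun i _ => ?_
  rw [Hi_single, mapH_bV, map_smul, toV_single]

/-! ### Transport of kernels -/

lemma map_ker_eq {α β : Type*} [AddCommGroup α] [Module ℚ α] [AddCommGroup β] [Module ℚ β]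
    (e : α ≃ₗ[ℚ] β) (A' : Module.End ℚ α) (A : Module.End ℚ β)
    (h : ∀ x, e (A' x) = A (e x)) :
    (LinearMap.ker A').map (e : α →ₗ[ℚ] β) = LinearMap.ker A := by
  ext x
  rw [Submodule.mem_map_equiv, LinearMap.mem_ker, LinearMap.mem_ker]
  constructor
  · intro h0
    have h1 := h (e.symm x)
    rw [h0, map_zero, e.apply_symm_apply] at h1
    exact h1.symm
  · intro h0
    have h1 := h (e.symm x)
    rw [e.apply_symm_apply, h0] at h1
    exact e.map_eq_zero_iff.mp h1

lemma ker_Hm (b : ℕ) :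
    LinearMap.ker (Hm n - (2 * (b:ℤ) - n) • (1 : Module.End ℚ (MS n))) = W n b := by
  ext g
  rw [LinearMap.mem_ker, mem_W]
  have happ : ∀ s, (Hm n - (2*(b:ℤ) - n) • (1:Module.End ℚ (MS n))) g s
      = (((2 * wt s : ℚ) - n) - ((2 * b : ℚ) - n)) * g s := by
    intro s
    rw [LinearMap.sub_apply, LinearMap.smul_apply, Module.End.one_apply]
    rw [Pi.sub_apply, Pi.smul_apply, zsmul_eq_mul, Hm_apply]
    push_cast
    ring
  constructor
  · intro h0 s hs
    have h1 := congrFun h0 s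
    rw [happ s] at h1
    have hcoef : (((2 * wt s : ℚ) - n) - ((2 * b : ℚ) - n)) ≠ 0 := by
      have : (wt s : ℚ) ≠ (b : ℚ) := by exact_mod_cast hs
      intro hc
      apply this
      linarith [hc]
    rcases mul_eq_zero.mp h1 with h2 | h2
    · exact absurd h2 hcoef
    · exact h2
  · intro h0
    funext s
    rw [happ s]
    show _ = (0 : MS n) s
    by_cases hwts : wt s = b
    · rw [hwts]
      simp
    · rw [h0 s hwts]
      simp

end SL2Dim


open SL2Dim in
/-- For `2b ≤ n`, the subspace `{v ∈ V : F v = 0, H v = (2b - n) v}` of `V = (ℚ²)^{⊗ n}`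
has dimension `binom(n,b) - binom(n,b-1)` (with `binom(n,-1) = 0`). -/
theorem dim_lowest_weight_space (n : ℕ) (hn : 1 ≤ n) (b : ℕ) (hb : 2 * b ≤ n) :
    (Module.finrank ℚ
        ↥(LinearMap.ker (FopQ n) ⊓
          LinearMap.ker (HopQ n - (2 * (b : ℤ) - (n : ℤ)) • (1 : Module.End ℚ (Vtens n)))) : ℤ) =
      (n.choose b : ℤ) - (if b = 0 then 0 else (n.choose (b - 1) : ℤ)) := by
  classical
  set z : ℤ := 2 * (b : ℤ) - n with hz
  have hF : ∀ x : MS n, phi n (Fm n x) = FopQ n (phi n x) := fun x => by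
    rw [phi_apply, phi_apply]
    exact LinearMap.congr_fun toV_Fm x
  have hH : ∀ x : MS n, phi n ((Hm n - z • (1 : Module.End ℚ (MS n))) x)
      = (HopQ n - z • (1 : Module.End ℚ (Vtens n))) (phi n x) := fun x => by
    simp only [LinearMap.sub_apply, LinearMap.smul_apply, Module.End.one_apply, map_sub,
      map_zsmul, phi_apply]
    have hcongr := LinearMap.congr_fun (toV_Hm (n := n)) x
    simp only [LinearMap.comp_apply] at hcongr
    rw [hcongr]
  have hFker := map_ker_eq (phi n) (Fm n) (FopQ n) hF
  have hHker := map_ker_eq (phi n) (Hm n - z • (1 : Module.End ℚ (MS n)))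
    (HopQ n - z • (1 : Module.End ℚ (Vtens n))) hH
  have key : LinearMap.ker (FopQ n) ⊓
        LinearMap.ker (HopQ n - z • (1 : Module.End ℚ (Vtens n)))
      = Submodule.map ((phi n : MS n →ₗ[ℚ] Vtens n))
        (LinearMap.ker (Fm n) ⊓
          LinearMap.ker (Hm n - z • (1 : Module.End ℚ (MS n)))) := by
    rw [Submodule.map_inf ((phi n : MS n →ₗ[ℚ] Vtens n))
      (fun a b hab => (phi n).injective hab), hFker, hHker]
  rw [key, LinearEquiv.finrank_map_eq, hz, ker_Hm b]
  by_cases hb0 : b = 0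
  · subst hb0
    rw [if_pos rfl]
    have hinf : LinearMap.ker (Fm n) ⊓ W n 0 = W n 0 := inf_eq_right.mpr W_zero_le_ker
    rw [hinf, finrank_W]
    simp
  · rw [if_neg hb0]
    have h1 : 1 ≤ b := Nat.one_le_iff_ne_zero.mpr hb0
    have hm := model_count h1 hb
    omega
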